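/- Let y be a multichain monomial of ℂ[y_S] whose partition μ(y) is semi-admissible or non-admissible for (𝓢_{n,k}, S_{n,k}) (resp. for (𝓡_{n,k}, R_{n,k})). Then y ∈ 𝓙_{n,k} (resp. y ∈ 𝓘_{n,k}), i.e. y = 0 in 𝓢_{n,k} (resp. in 𝓡_{n,k}). -/

import Mathlib

open scoped Classical
open MvPolynomial Finset

noncomputable section

/-- Nonempty subsets of `[n]`, the index set of the variables `y_S`. -/
abbrev NES (n : ℕ) := {S : Finset (Fin n) // S.Nonempty}

/-- The polynomial ring `ℂ[y_S]`. -/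
abbrev YRing (n : ℕ) := MvPolynomial (NES n) ℂ

/-- The polynomial ring `ℂ[x_1, …, x_n]`. -/
abbrev XRing (n : ℕ) := MvPolynomial (Fin n) ℂ

/-- The variable `y_F`, with junk value `1` when `F = ∅`. -/
def Yv {n : ℕ} (F : Finset (Fin n)) : YRing n :=
  if h : F.Nonempty then X ⟨F, h⟩ else 1

/-- `θ_i = Σ_{|S| = i} y_S^r`. -/
def theta (n r i : ℕ) : YRing n :=
  ∑ S ∈ univ.filter (fun S : NES n => S.1.card = i), X S ^ r

/-- Stanley–Reisner generators `y_S y_T` for incomparable `S, T`. -/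
def srSet (n : ℕ) : Set (YRing n) :=
  {p | ∃ S T : NES n, ¬ S.1 ⊆ T.1 ∧ ¬ T.1 ⊆ S.1 ∧ p = X S * X T}

/-- The generators `θ_{n-k+1}, …, θ_n`. -/
def thetaSet (n k r : ℕ) : Set (YRing n) :=
  {p | ∃ i : ℕ, n - k + 1 ≤ i ∧ i ≤ n ∧ p = theta n r i}

/-- Products `y_{S_1} ⋯ y_{S_m}` over multichains `S_1 ⊆ ⋯ ⊆ S_m` of length `m`. -/
def chainSet (n m : ℕ) : Set (YRing n) :=
  {p | ∃ S : Fin m → NES n, (∀ i j : Fin m, i ≤ j → (S i).1 ⊆ (S j).1) ∧ p = ∏ i, X (S i)}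

def SRideal (n : ℕ) : Ideal (YRing n) := Ideal.span (srSet n)

def STideal (n k r : ℕ) : Ideal (YRing n) := Ideal.span (srSet n ∪ thetaSet n k r)

/-- The ideal `𝓙_{n,k}`. -/
def Jideal (n k r : ℕ) : Ideal (YRing n) :=
  Ideal.span (srSet n ∪ thetaSet n k r ∪ chainSet n (k * r))

/-- The ideal `𝓘_{n,k}`. -/
def Iideal (n k r : ℕ) : Ideal (YRing n) :=
  Ideal.span (srSet n ∪ thetaSet n k r ∪ chainSet n (k * r + 1))

/-- An `r`-colored word of length `m` on distinct letters from `[n]`. -/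
structure CWord (n r m : ℕ) where
  letter : Fin m → Fin n
  inj : Function.Injective letter
  color : Fin m → Fin r

/-- `r`-colored permutations of `[n]`, i.e. the group `G(r,1,n)` as a set. -/
abbrev CPerm (n r : ℕ) := CWord n r n

/-- The order on colored letters: `(a,c) < (b,d)` iff `c > d`, or `c = d` and `a < b`. -/
def colLt {n r : ℕ} (a b : Fin n × Fin r) : Prop :=
  b.2 < a.2 ∨ (a.2 = b.2 ∧ a.1 < b.1)

/-- The descent set of a colored word (0-indexed positions). -/
def DesSet {n r m : ℕ} (w : CWord n r m) : Finset (Fin m) :=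
  univ.filter fun i => ∃ j : Fin m, (j : ℕ) = (i : ℕ) + 1 ∧
    colLt (w.letter j, w.color j) (w.letter i, w.color i)

def desNum {n r m : ℕ} (w : CWord n r m) : ℕ := (DesSet w).card

/-- `maj(w) = Σ colors + r · Σ_{i ∈ Des(w)} i` (1-based positions). -/
def majW {n r m : ℕ} (w : CWord n r m) : ℕ :=
  (∑ i, (w.color i : ℕ)) + r * ∑ i ∈ DesSet w, ((i : ℕ) + 1)

/-- The set of the first `t` letters of `w`. -/
def pref {n r m : ℕ} (w : CWord n r m) (t : ℕ) : Finset (Fin n) :=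
  univ.filter fun a => ∃ l : Fin m, (l : ℕ) < t ∧ w.letter l = a

/-- The exponent `m_i = c_i - c_{i+1} + r·[i ∈ Des(g)]` (and `m_last = c_last`). -/
def mExp {n r m : ℕ} (w : CWord n r m) (i : Fin m) : ℕ :=
  (((w.color i : ℤ) - (if h : (i : ℕ) + 1 < m then (w.color ⟨(i : ℕ) + 1, h⟩ : ℤ) else 0))
    + (if i ∈ DesSet w then (r : ℤ) else 0)).toNat

/-- The descent monomial `b̃_w`. -/
def btw {n r m : ℕ} (w : CWord n r m) : YRing n :=
  ∏ i : Fin m, Yv (pref w ((i : ℕ) + 1)) ^ mExp w i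

/-- `b̃_{(g,d)} = b̃_g · Π_i y_{T_i}^{r d_i}`. -/
def btd {n r : ℕ} (g : CPerm n r) (d : Fin n → ℕ) : YRing n :=
  btw g * ∏ i : Fin n, Yv (pref g ((i : ℕ) + 1)) ^ (r * d i)

/-- `b̃_{(w,λ)} = b̃_w · Π_j y_{S_{λ_j}}^r` for a list `λ` of parts. -/
def btl {n r m : ℕ} (w : CWord n r m) (lam : List ℕ) : YRing n :=
  btw w * (lam.map fun p => Yv (pref w p) ^ r).prod

/-- `r`-colored ordered set partitions of `[n]` with `k` blocks, encoded as pairs `(g, λ)`. -/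
structure OPIdx (n k r : ℕ) where
  g : CPerm n r
  lam : List ℕ
  sorted : lam.Pairwise (· ≥ ·)
  pos : ∀ p ∈ lam, 1 ≤ p
  parts_le : ∀ p ∈ lam, p ≤ n - k
  len : lam.length + desNum g + 1 ≤ k

def btOP {n k r : ℕ} (o : OPIdx n k r) : YRing n := btl o.g o.lam

/-- `k`-dimensional `G_n`-faces, encoded as triples `(Z, w, λ)`. -/
structure FIdx (n k r : ℕ) where
  Z : Finset (Fin n)
  cardZ : Z.card ≤ n - k
  w : CWord n r (n - Z.card)
  mem : ∀ j, w.letter j ∉ Z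
  lam : List ℕ
  sorted : lam.Pairwise (· ≥ ·)
  pos : ∀ p ∈ lam, 1 ≤ p
  parts_le : ∀ p ∈ lam, p ≤ n - Z.card - k
  len : lam.length + desNum w + 1 ≤ k

/-- The monomial `b̃_{(Z,g,λ)}`. -/
def btF {n k r : ℕ} (f : FIdx n k r) : YRing n :=
  Yv f.Z ^ (k * r - (btl f.w f.lam).totalDegree) *
    ((∏ i : Fin (n - f.Z.card), Yv (pref f.w ((i : ℕ) + 1) ∪ f.Z) ^ mExp f.w i) *
      (f.lam.map fun p => Yv (pref f.w p ∪ f.Z) ^ r).prod)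

/-- The transfer map `φ : ℂ[y_S] → ℂ[x_n]`, `y_S ↦ Π_{i ∈ S} x_i`. -/
def phi (n : ℕ) : YRing n →ₐ[ℂ] XRing n := aeval fun S : NES n => ∏ i ∈ S.1, X i

/-- An element of `G(r,1,n)`: a permutation together with `r`-th roots of unity. -/
structure GElem (n r : ℕ) where
  perm : Equiv.Perm (Fin n)
  scalar : Fin n → ℂ
  root : ∀ i, scalar i ^ r = 1

/-- The action of `G(r,1,n)` on `ℂ[x_n]` by linear substitution. -/
def actX {n r : ℕ} (g : GElem n r) : XRing n →ₐ[ℂ] XRing n :=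
  aeval fun i => g.scalar i • X (g.perm i)

/-- The action of `G(r,1,n)` on `ℂ[y_S]`, `g · y_S = α · y_{g(S)}`. -/
def actY {n r : ℕ} (g : GElem n r) : YRing n →ₐ[ℂ] YRing n :=
  aeval fun S : NES n =>
    (∏ i ∈ S.1, g.scalar i) • X (⟨S.1.image g.perm, S.2.image _⟩ : NES n)

/-- An exponent vector is a multichain if its support is a chain of subsets. -/
def IsChainE {n : ℕ} (e : NES n →₀ ℕ) : Prop :=
  ∀ S ∈ e.support, ∀ T ∈ e.support, S.1 ⊆ T.1 ∨ T.1 ⊆ S.1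

/-- `μ(y)`: the multiset of sizes (with multiplicity) of a monomial with exponents `e`. -/
def muE {n : ℕ} (e : NES n →₀ ℕ) : Multiset ℕ :=
  e.sum fun S m => Multiset.replicate m S.1.card

/-- Sum of the `j` largest entries of a multiset of naturals. -/
def psum (a : Multiset ℕ) (j : ℕ) : ℕ := (((a.sort (· ≤ ·)).reverse).take j).sum

/-- Dominance order on partitions (encoded as multisets) of the same number. -/
def domLE (a b : Multiset ℕ) : Prop := a.sum = b.sum ∧ ∀ j, psum a j ≤ psum b j

/-- Strict dominance order. -/
def domLT (a b : Multiset ℕ) : Prop := domLE a b ∧ a ≠ b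

/-- Order on the variables: `y_S > y_T` iff `|S| > |T|`, or `|S| = |T|` and
`min (S \ T) < min (T \ S)`. -/
def varGt {n : ℕ} (S T : NES n) : Prop :=
  T.1.card < S.1.card ∨
    (S.1.card = T.1.card ∧ ∃ a ∈ S.1 \ T.1, ∀ b ∈ T.1 \ S.1, a < b)

/-- The graded lexicographic order on monomials (exponent vectors) of `ℂ[y_S]`. -/
def monLt {n : ℕ} (e f : NES n →₀ ℕ) : Prop :=
  (e.sum fun _ m => m) < (f.sum fun _ m => m) ∨
    ((e.sum fun _ m => m) = (f.sum fun _ m => m) ∧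
      ∃ S, e S < f S ∧ ∀ T, varGt T S → e T = f T)

/-- `e` is the leading monomial of `p`. -/
def IsLM {n : ℕ} (p : YRing n) (e : NES n →₀ ℕ) : Prop :=
  e ∈ p.support ∧ ∀ f ∈ p.support, f ≠ e → monLt f e

/-- The ideal of leading monomials of nonzero elements of `I`. -/
def LMideal {n : ℕ} (I : Ideal (YRing n)) : Ideal (YRing n) :=
  Ideal.span {q | ∃ p e, p ∈ I ∧ p ≠ 0 ∧ IsLM p e ∧ q = (monomial e 1 : YRing n)}

/-- `e_d(x_1^r, …, x_n^r)`. -/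
def esymmR (n r d : ℕ) : XRing n :=
  ∑ t ∈ (univ : Finset (Fin n)).powersetCard d, ∏ i ∈ t, X i ^ r

/-- The ideal `J_{n,k}` of Chan–Rhoades. -/
def Jx (n k r : ℕ) : Ideal (XRing n) :=
  Ideal.span ({p | ∃ i : Fin n, p = X i ^ (k * r)} ∪
    {p | ∃ d : ℕ, n - k + 1 ≤ d ∧ d ≤ n ∧ p = esymmR n r d})

/-- The ideal `I_{n,k}` of Chan–Rhoades. -/
def Ix (n k r : ℕ) : Ideal (XRing n) :=
  Ideal.span ({p | ∃ i : Fin n, p = X i ^ (k * r + 1)} ∪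
    {p | ∃ d : ℕ, n - k + 1 ≤ d ∧ d ≤ n ∧ p = esymmR n r d})

/-- A partition `μ` (with parts at most `n`) is non-admissible for threshold `N`
(`N = kr` for the `S`-case, `N = kr+1` for the `R`-case) if it has at least `N` parts or
at least `r` parts equal to `n`. -/
def NonAdm (n r N : ℕ) (μ : Multiset ℕ) : Prop :=
  N ≤ Multiset.card μ ∨ r ≤ μ.count n

/-- A partition `μ` is semi-admissible for threshold `N` if it has fewer than `N` parts and
at most `r - 1` parts equal to `n`, but some value `n-k+1 ≤ i ≤ n-1` occurs at least
`r + 1` times. -/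
def SemiAdm (n k r N : ℕ) (μ : Multiset ℕ) : Prop :=
  Multiset.card μ < N ∧ μ.count n ≤ r - 1 ∧
    ∃ i : ℕ, n - k + 1 ≤ i ∧ i ≤ n - 1 ∧ r + 1 ≤ μ.count i
/-! ### Auxiliary lemmas for Statement 15 -/

lemma card_multiset_sum {ι : Type*} (s : Finset ι) (f : ι → Multiset ℕ) :
    Multiset.card (∑ i ∈ s, f i) = ∑ i ∈ s, Multiset.card (f i) := by
  induction s using Finset.cons_induction with
  | empty => simp
  | cons a s ha ih => simp [Finset.sum_cons, ih]

lemma card_muE {n : ℕ} (e : NES n →₀ ℕ) :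
    Multiset.card (muE e) = e.sum fun _ m => m := by
  rw [muE, Finsupp.sum, Finsupp.sum, card_multiset_sum]
  simp

lemma mem_muE {n : ℕ} {e : NES n →₀ ℕ} {i : ℕ} (h : i ∈ muE e) :
    ∃ S ∈ e.support, S.1.card = i := by
  rw [muE, Finsupp.sum, Multiset.mem_sum] at h
  obtain ⟨S, hS, hmem⟩ := h
  exact ⟨S, hS, ((Multiset.eq_of_mem_replicate hmem)).symm⟩

lemma count_muE {n : ℕ} {e : NES n →₀ ℕ} (he : IsChainE e) {S : NES n}
    (hS : S ∈ e.support) : Multiset.count S.1.card (muE e) = e S := by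
  rw [muE, Finsupp.sum, Multiset.count_sum']
  rw [Finset.sum_eq_single S]
  · simp [Multiset.count_replicate]
  · intro T hT hTS
    rw [Multiset.count_replicate, if_neg]
    intro hcard
    have hc : T.1.card = S.1.card := hcard
    apply hTS
    rcases he T hT S hS with h | h
    · exact Subtype.ext (Finset.eq_of_subset_of_card_le h hc.ge)
    · exact Subtype.ext (Finset.eq_of_subset_of_card_le h hc.le).symm
  · intro h; exact absurd hS h

lemma monomial_eq_mul {n : ℕ} {f e : NES n →₀ ℕ} (hfe : f ≤ e) :
    (monomial e 1 : YRing n) = monomial (e - f) 1 * monomial f 1 := by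
  rw [monomial_mul, one_mul, tsub_add_cancel_of_le hfe]

lemma monomial_mem_of_le {n : ℕ} {I : Ideal (YRing n)} {f e : NES n →₀ ℕ}
    (hfe : f ≤ e) (hf : (monomial f 1 : YRing n) ∈ I) : (monomial e 1 : YRing n) ∈ I := by
  rw [monomial_eq_mul hfe]
  exact I.mul_mem_left _ hf

lemma prod_X_eq_monomial {n : ℕ} {ι : Type*} (s : Finset ι) (S : ι → NES n) :
    (∏ i ∈ s, (X (S i) : YRing n)) = monomial (∑ i ∈ s, Finsupp.single (S i) 1) 1 := by
  induction s using Finset.cons_induction with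
  | empty => simp [MvPolynomial.monomial_zero']
  | cons a s ha ih =>
      rw [Finset.prod_cons, Finset.sum_cons, ih, MvPolynomial.X,
        monomial_mul, one_mul]

lemma exists_chain_le {n : ℕ} : ∀ (N : ℕ) (e : NES n →₀ ℕ), IsChainE e →
    N ≤ e.sum (fun _ m => m) →
    ∃ S : Fin N → NES n, (∀ i j : Fin N, i ≤ j → (S i).1 ⊆ (S j).1) ∧
      (∑ i, Finsupp.single (S i) 1) ≤ e := by
  intro N
  induction N with
  | zero =>
      intro e _ _
      exact ⟨Fin.elim0, fun i => i.elim0, by simp⟩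
  | succ N ih =>
      intro e he hdeg
      have hne : e.support.Nonempty := by
        by_contra h
        rw [Finset.not_nonempty_iff_eq_empty, Finsupp.support_eq_empty] at h
        subst h
        simp at hdeg
      obtain ⟨S₀, hS₀, hmin⟩ := Finset.exists_min_image e.support (fun S => S.1.card) hne
      have hmin' : ∀ T ∈ e.support, S₀.1 ⊆ T.1 := by
        intro T hT
        rcases he S₀ hS₀ T hT with h | h
        · exact h
        · rw [Subtype.ext (Finset.eq_of_subset_of_card_le h (hmin T hT))]
      have hle1 : Finsupp.single S₀ 1 ≤ e := by
        rw [Finsupp.single_le_iff]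
        exact Nat.one_le_iff_ne_zero.mpr (Finsupp.mem_support_iff.mp hS₀)
      set e' := e - Finsupp.single S₀ 1 with he'def
      have hee' : e' + Finsupp.single S₀ 1 = e := tsub_add_cancel_of_le hle1
      have hsupp : e'.support ⊆ e.support := Finsupp.support_tsub
      have hdeg' : N ≤ e'.sum fun _ m => m := by
        have : (e.sum fun _ m => m) = (e'.sum fun _ m => m) + 1 := by
          rw [← hee', Finsupp.sum_add_index' (fun _ => rfl) (fun _ _ _ => rfl),
            Finsupp.sum_single_index rfl]
        omega
      obtain ⟨T, hTchain, hTle⟩ := ih e' (fun S hS U hU => he S (hsupp hS) U (hsupp hU)) hdeg'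
      have hTsupp : ∀ j : Fin N, T j ∈ e'.support := by
        intro j
        rw [Finsupp.mem_support_iff]
        have h1 : (∑ i, Finsupp.single (T i) 1) (T j) ≤ e' (T j) := hTle _
        have h2 : (1 : ℕ) ≤ (∑ i, Finsupp.single (T i) 1) (T j) := by
          rw [Finsupp.finset_sum_apply]
          refine le_trans ?_ (Finset.single_le_sum (f := fun i => (Finsupp.single (T i) 1 : NES n →₀ ℕ) (T j)) (fun _ _ => Nat.zero_le _) (Finset.mem_univ j))
          simp
        omega
      refine ⟨Fin.cons S₀ T, ?_, ?_⟩
      · intro i j hij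
        rcases Fin.eq_zero_or_eq_succ i with rfl | ⟨i', rfl⟩ <;>
          rcases Fin.eq_zero_or_eq_succ j with rfl | ⟨j', rfl⟩
        · exact subset_rfl
        · simp only [Fin.cons_zero, Fin.cons_succ]
          exact hmin' _ (hsupp (hTsupp j'))
        · exact absurd hij (by simp [Fin.le_def])
        · simp only [Fin.cons_succ]
          exact hTchain i' j' (by
            simp only [Fin.le_def, Fin.val_succ] at hij ⊢
            omega)
      · rw [Fin.sum_univ_succ]
        simp only [Fin.cons_zero, Fin.cons_succ]
        rw [← hee', add_comm e' (Finsupp.single S₀ 1)]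
        exact add_le_add le_rfl hTle

lemma theta_mem_span {n k r : ℕ} {s : Set (YRing n)} (i : ℕ) (h1 : n - k + 1 ≤ i)
    (h2 : i ≤ n) (hsub : thetaSet n k r ⊆ s) : theta n r i ∈ Ideal.span s :=
  Ideal.subset_span (hsub ⟨i, h1, h2, rfl⟩)

lemma card_le_n {n : ℕ} (S : NES n) : S.1.card ≤ n := by
  simpa using Finset.card_le_univ S.1

/-- If `n-k+1 ≤ |S|`, then `y_S^{r+1}` lies in the span of `srSet ∪ thetaSet`. -/
lemma X_pow_succ_mem {n k r : ℕ} (hr : 1 ≤ r) (S : NES n) (h1 : n - k + 1 ≤ S.1.card)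
    {s : Set (YRing n)} (hsr : srSet n ⊆ s) (hth : thetaSet n k r ⊆ s) :
    (X S : YRing n) ^ (r + 1) ∈ Ideal.span s := by
  set i := S.1.card with hi
  have hSfil : S ∈ Finset.univ.filter (fun T : NES n => T.1.card = i) := by
    simp [hi]
  have hsplit : (X S : YRing n) * theta n r i =
      X S ^ (r + 1) + ∑ T ∈ (Finset.univ.filter (fun T : NES n => T.1.card = i)).erase S,
        (X S * X T) * X T ^ (r - 1) := by
    rw [theta, ← Finset.add_sum_erase _ _ hSfil, mul_add, Finset.mul_sum]
    congr 1
    · ring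
    · refine Finset.sum_congr rfl fun T hT => ?_
      have : (X T : YRing n) ^ r = X T * X T ^ (r - 1) := by
        conv_lhs => rw [show r = 1 + (r - 1) by omega]
        rw [pow_add, pow_one]
      rw [this]; ring
  have hXsr : X S ^ (r + 1) = (X S : YRing n) * theta n r i -
      ∑ T ∈ (Finset.univ.filter (fun T : NES n => T.1.card = i)).erase S,
        (X S * X T) * X T ^ (r - 1) := by
    rw [hsplit]; ring
  rw [hXsr]
  refine Ideal.sub_mem _ (Ideal.mul_mem_left _ _
    (theta_mem_span i h1 (hi ▸ card_le_n S) hth)) (Ideal.sum_mem _ fun T hT => ?_)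
  refine Ideal.mul_mem_right _ _ (Ideal.subset_span (hsr ?_))
  obtain ⟨hTne, hTfil⟩ := Finset.mem_erase.mp hT
  have hTcard : T.1.card = i := by simpa using hTfil
  refine ⟨S, T, ?_, ?_, rfl⟩
  · intro hsub'
    exact hTne ((Subtype.ext (Finset.eq_of_subset_of_card_le hsub' (by omega))).symm)
  · intro hsub'
    exact hTne (Subtype.ext (Finset.eq_of_subset_of_card_le hsub' (by omega)))

/-- If `|S| = n`, then `y_S^r = θ_n`. -/
lemma X_pow_r_eq_theta {n r : ℕ} (S : NES n) (hcard : S.1.card = n) :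
    (X S : YRing n) ^ r = theta n r n := by
  have hSuniv : S.1 = Finset.univ := Finset.eq_univ_of_card _ (by simp [hcard])
  rw [theta, Finset.sum_eq_single S]
  · intro T hT hTS
    exact absurd (Subtype.ext ((Finset.eq_univ_of_card T.1 (by simpa using (Finset.mem_filter.mp hT).2)).trans hSuniv.symm)) hTS
  · intro h
    exact absurd (by simp [hcard]) h

/-- Main lemma: general threshold version. -/
lemma main_mem {n k r N : ℕ} (hr : 1 ≤ r) (hn : 1 ≤ n) (hk : k ≤ n) (hN : N ≤ k * r + 1)
    (e : NES n →₀ ℕ) (he : IsChainE e)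
    (h : SemiAdm n k r N (muE e) ∨ NonAdm n r N (muE e)) :
    (monomial e 1 : YRing n) ∈ Ideal.span (srSet n ∪ thetaSet n k r ∪ chainSet n N) := by
  have hsr : srSet n ⊆ srSet n ∪ thetaSet n k r ∪ chainSet n N := by
    intro x hx; exact Set.mem_union_left _ (Set.mem_union_left _ hx)
  have hth : thetaSet n k r ⊆ srSet n ∪ thetaSet n k r ∪ chainSet n N := by
    intro x hx; exact Set.mem_union_left _ (Set.mem_union_right _ hx)
  have hch : chainSet n N ⊆ srSet n ∪ thetaSet n k r ∪ chainSet n N := fun x hx =>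
    Set.mem_union_right _ hx
  -- The "many parts" case
  have hbig : N ≤ Multiset.card (muE e) →
      (monomial e 1 : YRing n) ∈ Ideal.span (srSet n ∪ thetaSet n k r ∪ chainSet n N) := by
    intro hc
    rw [card_muE] at hc
    obtain ⟨S, hchain, hle⟩ := exists_chain_le N e he hc
    refine monomial_mem_of_le hle ?_
    rw [← prod_X_eq_monomial]
    exact Ideal.subset_span (hch ⟨S, hchain, rfl⟩)
  rcases h with ⟨_, _, i, hi1, hi2, hi3⟩ | h1 | h2
  · -- semi-admissible
    have himem : i ∈ muE e := Multiset.count_pos.mp (by omega)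
    obtain ⟨S, hS, hcard⟩ := mem_muE himem
    have hcount : Multiset.count i (muE e) = e S := by
      have := count_muE he hS; rwa [hcard] at this
    have heS : r + 1 ≤ e S := by omega
    refine monomial_mem_of_le (f := Finsupp.single S (r + 1))
      (Finsupp.single_le_iff.mpr heS) ?_
    rw [← MvPolynomial.X_pow_eq_monomial]
    exact X_pow_succ_mem hr S (by omega) hsr hth
  · exact hbig h1
  · -- at least r parts equal to n
    rcases Nat.eq_zero_or_pos k with hk0 | hk1
    · refine hbig ?_
      have := Multiset.count_le_card n (muE e)
      subst hk0; omega
    · have hnmem : (n : ℕ) ∈ muE e := Multiset.count_pos.mp (by omega)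
      obtain ⟨S, hS, hcard⟩ := mem_muE hnmem
      have hcount : Multiset.count n (muE e) = e S := by
        have := count_muE he hS; rwa [hcard] at this
      refine monomial_mem_of_le (f := Finsupp.single S r)
        (Finsupp.single_le_iff.mpr (by omega)) ?_
      rw [← MvPolynomial.X_pow_eq_monomial, X_pow_r_eq_theta S hcard]
      exact theta_mem_span n (by omega) le_rfl hth

/-- A multichain monomial whose partition is semi-admissible or
non-admissible vanishes in the corresponding quotient: it lies in `𝓙_{n,k}`
(threshold `kr`), resp. in `𝓘_{n,k}` (threshold `kr + 1`). -/
theorem multichain_semi_or_non_admissible_mem (n k r : ℕ) (hr : 1 ≤ r) (hn : 1 ≤ n)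
    (hk : k ≤ n) (e : NES n →₀ ℕ) (he : IsChainE e) :
    ((SemiAdm n k r (k * r) (muE e) ∨ NonAdm n r (k * r) (muE e)) →
        (monomial e 1 : YRing n) ∈ Jideal n k r) ∧
    ((SemiAdm n k r (k * r + 1) (muE e) ∨ NonAdm n r (k * r + 1) (muE e)) →
        (monomial e 1 : YRing n) ∈ Iideal n k r) := by
  refine ⟨fun h => ?_, fun h => ?_⟩
  · exact main_mem hr hn hk (Nat.le_succ _) e he h
  · exact main_mem hr hn hk le_rfl e he h

end
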